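/- Dissipation estimate for hypoelliptic Ornstein-Uhlenbeck semigroups: assume the Kalman rank condition Rank[Q^{1/2}, BQ^{1/2}, ..., B^{n-1}Q^{1/2}] = n. Then for every T > 0 there exists C_T > 1 such that for all 0 ≤ t ≤ T, all k ≥ 0, and all g₀ ∈ L²(ℝⁿ), ‖(1−π_k)(e^{tP̃}g₀)‖_{L²(ℝⁿ)} ≤ e^{−δ(t)k²} ‖g₀‖_{L²(ℝⁿ)}, where δ(t) = (1/C_T) min(t,t₀)^{2k₀+1}, k₀ is the smallest integer with Rank[Q^{1/2}, ..., B^{k₀}Q^{1/2}] = n, and t₀ is as in the Kalman integral lower bound. -/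

import Mathlib

open Matrix MeasureTheory

/-- The positive semidefinite square root of a positive semidefinite matrix
(removed from Mathlib; restored with its old definition). -/
noncomputable def Matrix.PosSemidef.sqrt {n : Type*} [Fintype n] [DecidableEq n]
    {A : Matrix n n ℝ} (hA : A.PosSemidef) : Matrix n n ℝ :=
  (hA.1.eigenvectorUnitary : Matrix n n ℝ) * diagonal ((↑) ∘ (√·) ∘ hA.1.eigenvalues) *
    (star hA.1.eigenvectorUnitary : Matrix n n ℝ)

/-- The Kalman matrix `[R, BR, ..., B^k R]`. -/
noncomputable def kalmanMatrix {n : ℕ} (R B : Matrix (Fin n) (Fin n) ℝ) (k : ℕ) :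
    Matrix (Fin n) (Fin (k + 1) × Fin n) ℝ :=
  fun i p => (B ^ (p.1 : ℕ) * R) i p.2

/-- The Fourier transform of `e^{tP̃}g₀` for `P̃ = (1/2)Tr(Q∇²) + ⟨Bx,∇⟩ + (1/2)Tr B`,
in terms of `G = ĝ₀`:
`ĝ(t,ξ) = e^{−(t/2)Tr B} ĝ₀(e^{−tBᵀ}ξ) exp(−(1/2)∫₀ᵗ |Q^{1/2}e^{(s−t)Bᵀ}ξ|² ds)`. -/
noncomputable def OUFourier {n : ℕ} {Q : Matrix (Fin n) (Fin n) ℝ}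
    (B : Matrix (Fin n) (Fin n) ℝ) (hQ : Q.PosSemidef)
    (G : (Fin n → ℝ) → ℂ) (t : ℝ) (ξ : Fin n → ℝ) : ℂ :=
  Complex.exp (-((t : ℂ) / 2) * ((Matrix.trace B : ℝ) : ℂ)) *
    G ((NormedSpace.exp (-(t • Bᵀ))).mulVec ξ) *
    Real.exp (-(1 / 2) *
      ∫ s in (0:ℝ)..t,
        (hQ.sqrt.mulVec ((NormedSpace.exp ((s - t) • Bᵀ)).mulVec ξ)) ⬝ᵥ
          (hQ.sqrt.mulVec ((NormedSpace.exp ((s - t) • Bᵀ)).mulVec ξ)))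


section stmt8Aux

open NormedSpace

section dotAux

variable {n : ℕ}

lemma dot_self_nonneg (v : Fin n → ℝ) : 0 ≤ v ⬝ᵥ v :=
  Finset.sum_nonneg fun i _ => mul_self_nonneg _

lemma dot_le_card_norm (v : Fin n → ℝ) : v ⬝ᵥ v ≤ (n : ℝ) * ‖v‖ ^ 2 := by
  have h : ∀ i : Fin n, v i * v i ≤ ‖v‖ ^ 2 := by
    intro i
    have h1 : |v i| ≤ ‖v‖ := by
      simpa [Real.norm_eq_abs] using norm_le_pi_norm v i
    have := mul_le_mul_of_nonneg_left h1 (abs_nonneg (v i))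
    calc v i * v i ≤ |v i| * |v i| := by
          rw [← abs_mul]; exact le_abs_self _
      _ ≤ ‖v‖ * ‖v‖ := by
          exact mul_le_mul h1 h1 (abs_nonneg _) (norm_nonneg _)
      _ = ‖v‖ ^ 2 := (sq ‖v‖).symm
  calc v ⬝ᵥ v = ∑ i, v i * v i := rfl
    _ ≤ ∑ _i : Fin n, ‖v‖ ^ 2 := Finset.sum_le_sum fun i _ => h i
    _ = (n : ℝ) * ‖v‖ ^ 2 := by simp [Finset.sum_const, nsmul_eq_mul]

lemma norm_sq_le_dot (v : Fin n → ℝ) : ‖v‖ ^ 2 ≤ v ⬝ᵥ v := by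
  have h1 : ‖v‖ ≤ Real.sqrt (v ⬝ᵥ v) := by
    refine pi_norm_le_iff_of_nonneg (Real.sqrt_nonneg _) |>.mpr fun i => ?_
    rw [Real.norm_eq_abs, ← Real.sqrt_sq_eq_abs]
    refine Real.sqrt_le_sqrt ?_
    calc v i ^ 2 = v i * v i := sq (v i)
      _ ≤ ∑ j, v j * v j := Finset.single_le_sum (f := fun j => v j * v j)
          (fun j _ => mul_self_nonneg _) (Finset.mem_univ i)
      _ = v ⬝ᵥ v := rfl
  calc ‖v‖ ^ 2 ≤ Real.sqrt (v ⬝ᵥ v) ^ 2 := by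
        exact pow_le_pow_left₀ (norm_nonneg _) h1 2
    _ = v ⬝ᵥ v := Real.sq_sqrt (dot_self_nonneg v)

end dotAux

/-- Determinant (in the rows) as a continuous multilinear map. -/
noncomputable def detCML (n : ℕ) :
    ContinuousMultilinearMap ℝ (fun _ : Fin n => (Fin n → ℝ)) ℝ :=
  MultilinearMap.mkContinuous
    ((Matrix.detRowAlternating : (Fin n → ℝ) [⋀^Fin n]→ₗ[ℝ] ℝ) :
      MultilinearMap ℝ (fun _ : Fin n => (Fin n → ℝ)) ℝ) (Nat.factorial n : ℝ) (by
    intro m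
    rw [show ((Matrix.detRowAlternating : (Fin n → ℝ) [⋀^Fin n]→ₗ[ℝ] ℝ) :
      MultilinearMap ℝ (fun _ : Fin n => (Fin n → ℝ)) ℝ) m = Matrix.det (Matrix.of m) from rfl]
    rw [Matrix.det_apply']
    refine (norm_sum_le _ _).trans ?_
    have hterm : ∀ σ : Equiv.Perm (Fin n),
        ‖(Equiv.Perm.sign σ : ℝ) * ∏ i, Matrix.of m (σ i) i‖ ≤ ∏ i, ‖m i‖ := by
      intro σ
      rw [norm_mul]
      have h1 : ‖((Equiv.Perm.sign σ : ℤ) : ℝ)‖ = 1 := by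
        rcases Int.units_eq_one_or (Equiv.Perm.sign σ) with h | h <;> rw [h] <;> norm_num
      rw [h1, one_mul]
      calc ‖∏ i, Matrix.of m (σ i) i‖ ≤ ∏ i, ‖m (σ i)‖ := by
            rw [norm_prod]
            exact Finset.prod_le_prod (fun _ _ => norm_nonneg _)
              (fun i _ => norm_le_pi_norm (m (σ i)) i)
        _ = ∏ i, ‖m i‖ := Equiv.prod_comp σ fun j => ‖m j‖
    refine (Finset.sum_le_sum fun σ _ => hterm σ).trans ?_
    rw [Finset.sum_const, Finset.card_univ, Fintype.card_perm, nsmul_eq_mul, Fintype.card_fin])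

lemma detCML_apply {n : ℕ} (m : Fin n → (Fin n → ℝ)) :
    detCML n m = Matrix.det (Matrix.of m) := by
  simp only [detCML, MultilinearMap.coe_mkContinuous]
  rfl

theorem Matrix.det_exp {n : ℕ} (A : Matrix (Fin n) (Fin n) ℝ) :
    (NormedSpace.exp A).det = Real.exp A.trace := by
  letI : SeminormedRing (Matrix (Fin n) (Fin n) ℝ) := Matrix.linftyOpSemiNormedRing
  letI : NormedRing (Matrix (Fin n) (Fin n) ℝ) := Matrix.linftyOpNormedRing
  letI : NormedAlgebra ℝ (Matrix (Fin n) (Fin n) ℝ) := Matrix.linftyOpNormedAlgebra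
  -- the rows map, as a continuous linear map
  let ι : Matrix (Fin n) (Fin n) ℝ →ₗ[ℝ] (Fin n → (Fin n → ℝ)) :=
    { toFun := fun M => M
      map_add' := fun _ _ => rfl
      map_smul' := fun _ _ => rfl }
  have hι : Continuous ι := ι.continuous_of_finiteDimensional
  let ιL : Matrix (Fin n) (Fin n) ℝ →L[ℝ] (Fin n → (Fin n → ℝ)) :=
    { toLinearMap := ι, cont := hι }
  set g : ℝ → ℝ := fun t => (NormedSpace.exp (t • A)).det with hgdef
  have hg : ∀ t : ℝ, HasDerivAt g (A.trace * g t) t := by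
    intro t
    have h1 : HasDerivAt (fun u : ℝ => NormedSpace.exp (u • A))
        (A * NormedSpace.exp (t • A)) t := hasDerivAt_exp_smul_const' A t
    set F := NormedSpace.exp (t • A) with hF
    have h2 : HasFDerivAt (detCML n) ((detCML n).linearDeriv (ιL F)) (ιL F) :=
      ContinuousMultilinearMap.hasFDerivAt _ _
    have h3 : HasDerivAt (fun u : ℝ => detCML n (ιL (NormedSpace.exp (u • A))))
        ((detCML n).linearDeriv (ιL F) (ιL (A * F))) t := by
      have hιF : HasFDerivAt (fun M : Matrix (Fin n) (Fin n) ℝ => detCML n (ιL M))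
          (((detCML n).linearDeriv (ιL F)).comp ιL) F :=
        h2.comp F ιL.hasFDerivAt
      exact hιF.comp_hasDerivAt t h1
    have hval : (detCML n).linearDeriv (ιL F) (ιL (A * F)) = A.trace * F.det := by
      rw [ContinuousMultilinearMap.linearDeriv_apply]
      have hterm : ∀ i, detCML n (Function.update (ιL F) i (ιL (A * F) i))
          = A i i * F.det := by
        intro i
        have hrow : (ιL (A * F)) i = ∑ k, A i k • F k := by
          funext j
          simp [ιL, ι, Matrix.mul_apply, Finset.sum_apply]
          rfl
        rw [hrow]
        have : Function.update (ιL F) i (∑ k, A i k • F k)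
            = Matrix.updateRow F i (∑ k, A i k • F k) := rfl
        rw [this]
        refine (detCML_apply _).trans ?_
        have : Matrix.of (Matrix.updateRow F i (∑ k, A i k • F k))
            = Matrix.updateRow F i (∑ k, A i k • F k) := rfl
        rw [this, Matrix.det_updateRow_sum]
        simp [smul_eq_mul]
      rw [Finset.sum_congr rfl fun i _ => hterm i, ← Finset.sum_mul, Matrix.trace]
      rfl
    rw [← hval]
    have hfun : (fun u : ℝ => detCML n (ιL (NormedSpace.exp (u • A)))) = g := by
      funext u
      rw [detCML_apply]
      rfl
    exact hfun ▸ h3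
  -- solve the ODE
  have hconst : ∀ t : ℝ, g t * Real.exp (-A.trace * t) = 1 := by
    have hder : ∀ t : ℝ, HasDerivAt (fun u => g u * Real.exp (-A.trace * u)) 0 t := by
      intro t
      have he : HasDerivAt (fun u : ℝ => Real.exp (-A.trace * u))
          (Real.exp (-A.trace * t) * -A.trace) t := by
        have : HasDerivAt (fun u : ℝ => -A.trace * u) (-A.trace) t := by
          simpa using (hasDerivAt_id t).const_mul (-A.trace)
        exact this.exp
      have := (hg t).mul he
      exact this.congr_deriv (by ring)
    have hd : ∀ t : ℝ, deriv (fun u => g u * Real.exp (-A.trace * u)) t = 0 :=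
      fun t => (hder t).deriv
    intro t
    have : (fun u => g u * Real.exp (-A.trace * u)) t
        = (fun u => g u * Real.exp (-A.trace * u)) 0 :=
      is_const_of_deriv_eq_zero (fun x => (hder x).differentiableAt) hd t 0
    simpa [hgdef] using this
  have h1 := hconst 1
  have h2 : g 1 = (NormedSpace.exp A).det := by rw [hgdef]; simp
  rw [h2] at h1
  have h3 : Real.exp (-A.trace * 1) = (Real.exp A.trace)⁻¹ := by
    rw [← Real.exp_neg]
    norm_num
  rw [h3] at h1
  field_simp at h1
  linarith

end stmt8Aux

/-- dissipation estimate for hypoelliptic Ornstein-Uhlenbeck semigroups, stated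
on the Fourier side (by Plancherel, `‖(1−π_k)e^{tP̃}g₀‖_{L²}` is proportional to the square
root of `∫_{|ξ|≥k}|ĝ(t,ξ)|²dξ` and `‖g₀‖_{L²}` to that of `∫|ĝ₀|²`): under the Kalman rank
condition, for every `T > 0` there is `C_T > 1` such that for `0 ≤ t ≤ T`, `k ∈ ℕ` and
`g₀ ∈ L²`, `‖(1−π_k)(e^{tP̃}g₀)‖ ≤ e^{−δ(t)k²}‖g₀‖` with
`δ(t) = (1/C_T) min(t,t₀)^{2k₀+1}`, `k₀` the smallest integer with
`Rank[Q^{1/2},...,B^{k₀}Q^{1/2}] = n`, and `t₀` as in the Kalman integral lower bound. -/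
theorem stmt8 {n : ℕ} (Q B : Matrix (Fin n) (Fin n) ℝ) (hQ : Q.PosSemidef)
    (hKal : (kalmanMatrix hQ.sqrt B (n - 1)).rank = n)
    (k₀ : ℕ) (hk₀ : IsLeast {k : ℕ | (kalmanMatrix hQ.sqrt B k).rank = n} k₀)
    (c t₀ : ℝ) (hc : 0 < c) (ht₀ : 0 < t₀) (ht₀1 : t₀ ≤ 1)
    (hlow : ∀ t : ℝ, 0 ≤ t → t ≤ t₀ → ∀ X : Fin n → ℝ,
      c * t ^ (2 * k₀ + 1) * (X ⬝ᵥ X) ≤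
        ∫ s in (0:ℝ)..t,
          (hQ.sqrt.mulVec ((NormedSpace.exp (s • Bᵀ)).mulVec X)) ⬝ᵥ
            (hQ.sqrt.mulVec ((NormedSpace.exp (s • Bᵀ)).mulVec X)))
    (T : ℝ) (hT : 0 < T) :
    ∃ C : ℝ, 1 < C ∧ ∀ t : ℝ, 0 ≤ t → t ≤ T → ∀ k : ℕ,
      ∀ G : (Fin n → ℝ) → ℂ, MemLp G 2 volume →
        Real.sqrt (∫ ξ : Fin n → ℝ,
            Set.indicator {ξ : Fin n → ℝ | (k : ℝ) ≤ Real.sqrt (ξ ⬝ᵥ ξ)}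
              (fun ξ => ‖OUFourier B hQ G t ξ‖ ^ 2) ξ) ≤
          Real.exp (-(min t t₀ ^ (2 * k₀ + 1) / C) * (k : ℝ) ^ 2) *
            Real.sqrt (∫ ξ : Fin n → ℝ, ‖G ξ‖ ^ 2) := by
  letI : SeminormedRing (Matrix (Fin n) (Fin n) ℝ) := Matrix.linftyOpSemiNormedRing
  letI : NormedRing (Matrix (Fin n) (Fin n) ℝ) := Matrix.linftyOpNormedRing
  letI : NormedAlgebra ℝ (Matrix (Fin n) (Fin n) ℝ) := Matrix.linftyOpNormedAlgebra
  letI : NormedAlgebra ℚ (Matrix (Fin n) (Fin n) ℝ) := NormedAlgebra.restrictScalars ℚ ℝ _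
  have hWcont : Continuous (fun s : ℝ => NormedSpace.exp (s • Bᵀ)) :=
    NormedSpace.exp_continuous.comp (continuous_id.smul continuous_const)
  obtain ⟨M₀, hM₀⟩ :=
    (isCompact_Icc : IsCompact (Set.Icc (0:ℝ) T)).exists_bound_of_continuousOn
      hWcont.continuousOn
  set M : ℝ := n * M₀ ^ 2 + 1 with hMdef
  have hM₀0 : 0 ≤ M₀ := le_trans (norm_nonneg _) (hM₀ 0 ⟨le_refl _, hT.le⟩)
  have hM1 : 0 < M := by positivity
  refine ⟨max 2 (2 * M / c), lt_of_lt_of_le one_lt_two (le_max_left _ _), ?_⟩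
  set C : ℝ := max 2 (2 * M / c) with hCdef
  have hC0 : 0 < C := lt_of_lt_of_le two_pos (le_max_left _ _)
  intro t ht htT k G hG
  set m : ℝ := min t t₀ with hmdef
  have hm0 : 0 ≤ m := le_min ht ht₀.le
  have hmt : m ≤ t := min_le_left _ _
  -- algebraic identities for the matrix exponential
  have hcomm : ∀ s u : ℝ, Commute (s • Bᵀ) (-(u • Bᵀ)) := fun s u =>
    (((Commute.refl Bᵀ).smul_left s).smul_right u).neg_right
  have hWinv : ∀ u : ℝ,
      NormedSpace.exp (u • Bᵀ) * NormedSpace.exp (-(u • Bᵀ)) = 1 := by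
    intro u
    erw [← NormedSpace.exp_add_of_commute (hcomm u u), add_neg_cancel, NormedSpace.exp_zero]
  have hsplit : ∀ s : ℝ, NormedSpace.exp ((s - t) • Bᵀ)
      = NormedSpace.exp (s • Bᵀ) * NormedSpace.exp (-(t • Bᵀ)) := by
    intro s
    rw [sub_smul, sub_eq_add_neg]
    exact NormedSpace.exp_add_of_commute (hcomm s t)
  set Ne : Matrix (Fin n) (Fin n) ℝ := NormedSpace.exp (-(t • Bᵀ)) with hNedef
  -- the change of variables
  set L : (Fin n → ℝ) →ₗ[ℝ] (Fin n → ℝ) := Matrix.toLin' Ne with hLdef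
  have hLξ : ∀ ξ, L ξ = Ne.mulVec ξ := fun ξ => Matrix.toLin'_apply _ _
  have hLcont : Continuous L := L.continuous_of_finiteDimensional
  have htr : (-(t • Bᵀ)).trace = -(t * B.trace) := by
    rw [Matrix.trace_neg, Matrix.trace_smul, Matrix.trace_transpose, smul_eq_mul]
  have hLdet : LinearMap.det L = Real.exp (-(t * B.trace)) := by
    rw [hLdef, LinearMap.det_toLin', hNedef, Matrix.det_exp, htr]
  have hmap : Measure.map L volume
      = ENNReal.ofReal (Real.exp (t * B.trace)) • volume := by
    rw [Real.map_linearMap_volume_pi_eq_smul_volume_pi (by rw [hLdet]; positivity)]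
    congr 1
    rw [hLdet, ← Real.exp_neg, neg_neg, abs_of_pos (Real.exp_pos _)]
  -- integrability facts
  have hGsq : Integrable (fun ξ : Fin n → ℝ => ‖G ξ‖ ^ 2) volume := by
    have h := hG.integrable_norm_rpow two_ne_zero ENNReal.ofNat_ne_top
    simpa [ENNReal.toReal_ofNat, Real.rpow_natCast] using h
  have hAESM : AEStronglyMeasurable (fun ξ : Fin n → ℝ => ‖G ξ‖ ^ 2)
      (Measure.map L volume) := by
    rw [hmap]
    exact hGsq.aestronglyMeasurable.mono_ac Measure.smul_absolutelyContinuous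
  have hCoV : ∫ ξ : Fin n → ℝ, ‖G (Ne.mulVec ξ)‖ ^ 2
      = Real.exp (t * B.trace) * ∫ ξ : Fin n → ℝ, ‖G ξ‖ ^ 2 := by
    have h1 := integral_map hLcont.aemeasurable hAESM
    rw [hmap, integral_smul_measure,
      ENNReal.toReal_ofReal (Real.exp_pos _).le, smul_eq_mul] at h1
    have h2 : (fun ξ : Fin n → ℝ => ‖G (Ne.mulVec ξ)‖ ^ 2)
        = fun ξ : Fin n → ℝ => ‖G (L ξ)‖ ^ 2 := by
      funext ξ; rw [hLξ]
    rw [h2]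
    exact h1.symm
  have hcompInt : Integrable (fun ξ : Fin n → ℝ => ‖G (Ne.mulVec ξ)‖ ^ 2) volume := by
    have h1 : Integrable (fun ξ : Fin n → ℝ => ‖G ξ‖ ^ 2) (Measure.map L volume) := by
      rw [hmap]
      exact hGsq.smul_measure ENNReal.ofReal_ne_top
    have h2 := (integrable_map_measure hAESM hLcont.aemeasurable).mp h1
    have : ((fun ξ : Fin n → ℝ => ‖G ξ‖ ^ 2) ∘ L)
        = fun ξ : Fin n → ℝ => ‖G (Ne.mulVec ξ)‖ ^ 2 := by
      funext ξ; simp [Function.comp, hLξ]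
    rwa [this] at h2
  -- pointwise norm identity
  have hnormsq : ∀ ξ : Fin n → ℝ, ‖OUFourier B hQ G t ξ‖ ^ 2
      = Real.exp (-(t * B.trace)) *
        Real.exp (-(∫ s in (0:ℝ)..t,
          (hQ.sqrt.mulVec ((NormedSpace.exp ((s - t) • Bᵀ)).mulVec ξ)) ⬝ᵥ
            (hQ.sqrt.mulVec ((NormedSpace.exp ((s - t) • Bᵀ)).mulVec ξ)))) *
        ‖G (Ne.mulVec ξ)‖ ^ 2 := by
    intro ξ
    rw [OUFourier]
    set I : ℝ := ∫ s in (0:ℝ)..t,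
      (hQ.sqrt.mulVec ((NormedSpace.exp ((s - t) • Bᵀ)).mulVec ξ)) ⬝ᵥ
        (hQ.sqrt.mulVec ((NormedSpace.exp ((s - t) • Bᵀ)).mulVec ξ)) with hI
    rw [norm_mul, norm_mul]
    have hz : (-((t : ℂ) / 2) * ((B.trace : ℝ) : ℂ)) = ((-(t / 2) * B.trace : ℝ) : ℂ) := by
      push_cast; ring
    have h1 : ‖Complex.exp (-((t : ℂ) / 2) * ((B.trace : ℝ) : ℂ))‖
        = Real.exp (-(t / 2) * B.trace) := by
      rw [hz, Complex.norm_exp, Complex.ofReal_re]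
    have h3 : ‖((Real.exp (-(1 / 2) * I) : ℝ) : ℂ)‖ = Real.exp (-(1 / 2) * I) := by
      rw [Complex.norm_real, Real.norm_eq_abs, abs_of_pos (Real.exp_pos _)]
    rw [h1, h3]
    rw [mul_pow, mul_pow, sq (Real.exp (-(t / 2) * B.trace)), ← Real.exp_add,
      sq (Real.exp (-(1 / 2) * I)), ← Real.exp_add,
      show -(t / 2) * B.trace + -(t / 2) * B.trace = -(t * B.trace) by ring,
      show -(1 / 2) * I + -(1 / 2) * I = -I by ring]
    ring
  -- key integral lower bound on the high-frequency set
  have hIbound : ∀ ξ : Fin n → ℝ, (k : ℝ) ≤ Real.sqrt (ξ ⬝ᵥ ξ) →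
      c * m ^ (2 * k₀ + 1) * ((k : ℝ) ^ 2 / M) ≤
        ∫ s in (0:ℝ)..t,
          (hQ.sqrt.mulVec ((NormedSpace.exp ((s - t) • Bᵀ)).mulVec ξ)) ⬝ᵥ
            (hQ.sqrt.mulVec ((NormedSpace.exp ((s - t) • Bᵀ)).mulVec ξ)) := by
    intro ξ hξ
    set X : Fin n → ℝ := Ne.mulVec ξ with hXdef
    have hrw : ∀ s : ℝ, (NormedSpace.exp ((s - t) • Bᵀ)).mulVec ξ
        = (NormedSpace.exp (s • Bᵀ)).mulVec X := by
      intro s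
      rw [hsplit s, ← Matrix.mulVec_mulVec]
    have hback : (NormedSpace.exp (t • Bᵀ)).mulVec X = ξ := by
      rw [hXdef, Matrix.mulVec_mulVec, hWinv t, Matrix.one_mulVec]
    have hk2 : (k : ℝ) ^ 2 ≤ ξ ⬝ᵥ ξ := by
      have h := pow_le_pow_left₀ (by positivity : (0:ℝ) ≤ (k:ℝ)) hξ 2
      rwa [Real.sq_sqrt (dot_self_nonneg ξ)] at h
    have hnorm : ‖NormedSpace.exp (t • Bᵀ)‖ ≤ M₀ := hM₀ t ⟨ht, htT⟩
    have hξX : ξ ⬝ᵥ ξ ≤ M * (X ⬝ᵥ X) := by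
      have h1 : ‖ξ‖ ≤ M₀ * ‖X‖ := by
        rw [← hback]
        exact (Matrix.linfty_opNorm_mulVec _ _).trans
          (mul_le_mul_of_nonneg_right hnorm (norm_nonneg _))
      calc ξ ⬝ᵥ ξ ≤ (n : ℝ) * ‖ξ‖ ^ 2 := dot_le_card_norm ξ
        _ ≤ (n : ℝ) * (M₀ * ‖X‖) ^ 2 := by
            have h2 := pow_le_pow_left₀ (norm_nonneg ξ) h1 2
            exact mul_le_mul_of_nonneg_left h2 (by positivity)
        _ = ((n : ℝ) * M₀ ^ 2) * ‖X‖ ^ 2 := by ring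
        _ ≤ ((n : ℝ) * M₀ ^ 2) * (X ⬝ᵥ X) :=
            mul_le_mul_of_nonneg_left (norm_sq_le_dot X) (by positivity)
        _ ≤ M * (X ⬝ᵥ X) :=
            mul_le_mul_of_nonneg_right (by rw [hMdef]; linarith) (dot_self_nonneg X)
    have hXlow : (k : ℝ) ^ 2 / M ≤ X ⬝ᵥ X := by
      rw [div_le_iff₀ hM1]
      nlinarith [hk2, hξX, dot_self_nonneg X]
    have hφc : Continuous (fun s : ℝ =>
        (hQ.sqrt.mulVec ((NormedSpace.exp (s • Bᵀ)).mulVec X)) ⬝ᵥ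
          (hQ.sqrt.mulVec ((NormedSpace.exp (s • Bᵀ)).mulVec X))) := by
      have hmv : Continuous (fun s : ℝ => (NormedSpace.exp (s • Bᵀ)).mulVec X) := by
        let mv : Matrix (Fin n) (Fin n) ℝ →ₗ[ℝ] (Fin n → ℝ) :=
          { toFun := fun N => N.mulVec X
            map_add' := fun N₁ N₂ => Matrix.add_mulVec _ _ _
            map_smul' := fun r N => by simp [Matrix.smul_mulVec] }
        exact mv.continuous_of_finiteDimensional.comp hWcont
      have hd : Continuous (fun v : Fin n → ℝ =>
          (hQ.sqrt.mulVec v) ⬝ᵥ (hQ.sqrt.mulVec v)) := by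
        have h2 : Continuous (fun v : Fin n → ℝ => hQ.sqrt.mulVec v) := by
          have h3 := (Matrix.mulVecLin hQ.sqrt).continuous_of_finiteDimensional
          exact h3
        unfold dotProduct
        exact continuous_finset_sum _ fun i _ =>
          ((continuous_apply i).comp h2).mul ((continuous_apply i).comp h2)
      exact hd.comp hmv
    have hmono : (∫ s in (0:ℝ)..m,
          (hQ.sqrt.mulVec ((NormedSpace.exp (s • Bᵀ)).mulVec X)) ⬝ᵥ
            (hQ.sqrt.mulVec ((NormedSpace.exp (s • Bᵀ)).mulVec X)))
        ≤ ∫ s in (0:ℝ)..t,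
          (hQ.sqrt.mulVec ((NormedSpace.exp (s • Bᵀ)).mulVec X)) ⬝ᵥ
            (hQ.sqrt.mulVec ((NormedSpace.exp (s • Bᵀ)).mulVec X)) :=
      intervalIntegral.integral_mono_interval le_rfl hm0 hmt
        (Filter.Eventually.of_forall fun s => dot_self_nonneg _)
        (hφc.intervalIntegrable _ _)
    have hfuneq : (fun s : ℝ =>
        (hQ.sqrt.mulVec ((NormedSpace.exp ((s - t) • Bᵀ)).mulVec ξ)) ⬝ᵥ
          (hQ.sqrt.mulVec ((NormedSpace.exp ((s - t) • Bᵀ)).mulVec ξ)))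
        = fun s : ℝ =>
        (hQ.sqrt.mulVec ((NormedSpace.exp (s • Bᵀ)).mulVec X)) ⬝ᵥ
          (hQ.sqrt.mulVec ((NormedSpace.exp (s • Bᵀ)).mulVec X)) := by
      funext s; rw [hrw s]
    calc c * m ^ (2 * k₀ + 1) * ((k : ℝ) ^ 2 / M)
        ≤ c * m ^ (2 * k₀ + 1) * (X ⬝ᵥ X) := by
          refine mul_le_mul_of_nonneg_left hXlow ?_
          exact mul_nonneg hc.le (pow_nonneg hm0 _)
      _ ≤ ∫ s in (0:ℝ)..m,
          (hQ.sqrt.mulVec ((NormedSpace.exp (s • Bᵀ)).mulVec X)) ⬝ᵥ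
            (hQ.sqrt.mulVec ((NormedSpace.exp (s • Bᵀ)).mulVec X)) :=
          hlow m hm0 (min_le_right t t₀) X
      _ ≤ ∫ s in (0:ℝ)..t,
          (hQ.sqrt.mulVec ((NormedSpace.exp (s • Bᵀ)).mulVec X)) ⬝ᵥ
            (hQ.sqrt.mulVec ((NormedSpace.exp (s • Bᵀ)).mulVec X)) := hmono
      _ = ∫ s in (0:ℝ)..t,
          (hQ.sqrt.mulVec ((NormedSpace.exp ((s - t) • Bᵀ)).mulVec ξ)) ⬝ᵥ
            (hQ.sqrt.mulVec ((NormedSpace.exp ((s - t) • Bᵀ)).mulVec ξ)) := by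
          rw [hfuneq]
  -- pointwise domination
  set a : ℝ := c * m ^ (2 * k₀ + 1) * ((k : ℝ) ^ 2 / M) with hadef
  have hpoint : ∀ ξ : Fin n → ℝ,
      Set.indicator {ξ : Fin n → ℝ | (k : ℝ) ≤ Real.sqrt (ξ ⬝ᵥ ξ)}
        (fun ξ => ‖OUFourier B hQ G t ξ‖ ^ 2) ξ
      ≤ Real.exp (-(t * B.trace)) * (Real.exp (-a) * ‖G (Ne.mulVec ξ)‖ ^ 2) := by
    intro ξ
    by_cases hξ : ξ ∈ {ξ : Fin n → ℝ | (k : ℝ) ≤ Real.sqrt (ξ ⬝ᵥ ξ)}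
    · rw [Set.indicator_of_mem hξ, hnormsq ξ]
      have hI := hIbound ξ hξ
      have hexp : Real.exp (-(∫ s in (0:ℝ)..t,
          (hQ.sqrt.mulVec ((NormedSpace.exp ((s - t) • Bᵀ)).mulVec ξ)) ⬝ᵥ
            (hQ.sqrt.mulVec ((NormedSpace.exp ((s - t) • Bᵀ)).mulVec ξ))))
          ≤ Real.exp (-a) := Real.exp_le_exp.mpr (neg_le_neg hI)
      rw [mul_assoc]
      refine mul_le_mul_of_nonneg_left ?_ (Real.exp_pos _).le
      exact mul_le_mul_of_nonneg_right hexp (by positivity)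
    · rw [Set.indicator_of_notMem hξ]
      positivity
  -- integrate the pointwise bound
  have hIntineq : (∫ ξ : Fin n → ℝ,
      Set.indicator {ξ : Fin n → ℝ | (k : ℝ) ≤ Real.sqrt (ξ ⬝ᵥ ξ)}
        (fun ξ => ‖OUFourier B hQ G t ξ‖ ^ 2) ξ)
      ≤ Real.exp (-a) * ∫ ξ : Fin n → ℝ, ‖G ξ‖ ^ 2 := by
    have h1 := integral_mono_of_nonneg
      (Filter.Eventually.of_forall fun ξ =>
        Set.indicator_nonneg (fun x _ => by positivity) ξ)
      (((hcompInt.const_mul (Real.exp (-a))).const_mul (Real.exp (-(t * B.trace)))))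
      (Filter.Eventually.of_forall hpoint)
    refine h1.trans ?_
    rw [integral_const_mul, integral_const_mul, hCoV]
    rw [show Real.exp (-(t * B.trace)) * (Real.exp (-a) *
        (Real.exp (t * B.trace) * ∫ ξ : Fin n → ℝ, ‖G ξ‖ ^ 2))
      = (Real.exp (-(t * B.trace)) * Real.exp (t * B.trace)) *
        (Real.exp (-a) * ∫ ξ : Fin n → ℝ, ‖G ξ‖ ^ 2) by ring,
      ← Real.exp_add, neg_add_cancel, Real.exp_zero, one_mul]
  -- take square roots and conclude
  have hG0 : 0 ≤ ∫ ξ : Fin n → ℝ, ‖G ξ‖ ^ 2 :=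
    integral_nonneg fun ξ => by positivity
  have hs1 := Real.sqrt_le_sqrt hIntineq
  rw [Real.sqrt_mul (Real.exp_pos _).le, ← Real.exp_half] at hs1
  refine hs1.trans ?_
  refine mul_le_mul_of_nonneg_right (Real.exp_le_exp.mpr ?_) (Real.sqrt_nonneg _)
  -- -(m^(2k₀+1)/C) * k² ≤ -a/2
  rw [hadef, neg_div, neg_mul]
  have hfin : m ^ (2 * k₀ + 1) / C * (k : ℝ) ^ 2
      ≤ c * m ^ (2 * k₀ + 1) * ((k : ℝ) ^ 2 / M) / 2 := by
    have hCge : 2 * M / c ≤ C := le_max_right _ _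
    have h2M : (0:ℝ) < 2 * M / c := by positivity
    have hstep : m ^ (2 * k₀ + 1) / C ≤ m ^ (2 * k₀ + 1) / (2 * M / c) :=
      div_le_div_of_nonneg_left (pow_nonneg hm0 _) h2M hCge
    calc m ^ (2 * k₀ + 1) / C * (k : ℝ) ^ 2
        ≤ m ^ (2 * k₀ + 1) / (2 * M / c) * (k : ℝ) ^ 2 :=
          mul_le_mul_of_nonneg_right hstep (by positivity)
      _ = c * m ^ (2 * k₀ + 1) * ((k : ℝ) ^ 2 / M) / 2 := by
          field_simp
  exact neg_le_neg hfin
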